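/- Let v₁, v₂, v₃ ∈ ℝ² be distinct, non-collinear, and ordered counterclockwise, i.e. (v₂ − v₁) × (v₃ − v₂) > 0 where a × b = a₁b₂ − a₂b₁. Let ξ ∈ ℝ² be the circumcenter, i.e. ‖v₁ − ξ‖ = ‖v₂ − ξ‖ = ‖v₃ − ξ‖, and let Δ be the convex hull of {v₁, v₂, v₃}. For each cyclic pair (i,j) ∈ {(1,2), (2,3), (3,1)} set v_{ij} = (v_i + v_j)/2, τ_{ij} = J(v_j − v_i) where J(a₁,a₂) = (−a₂, a₁), and ξ_{ij} = ⟨v_{ij} − ξ, τ_{ij}⟩. Then: if ξ ∈ Δ, then ξ_{ij} ≤ 0 for all three cyclic pairs; if ξ ∉ Δ, then ξ_{ij} > 0 holds for exactly one cyclic pair, namely a pair for which ‖v_{ij} − ξ‖ equals the distance from ξ to Δ. -/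

import Mathlib

open scoped RealInnerProductSpace
noncomputable section

/-- Scalar cross product in the plane: `a × b = a₁b₂ − a₂b₁`. -/
def cross2 (a b : EuclideanSpace ℝ (Fin 2)) : ℝ :=
  a 0 * b 1 - a 1 * b 0

/-- Counterclockwise rotation by π/2: `J(a₁,a₂) = (−a₂, a₁)`. -/
def Jrot (a : EuclideanSpace ℝ (Fin 2)) : EuclideanSpace ℝ (Fin 2) :=
  (WithLp.equiv 2 (Fin 2 → ℝ)).symm ![-(a 1), a 0]

abbrev E2 := EuclideanSpace ℝ (Fin 2)

lemma inner2 (a b : E2) : ⟪a,b⟫ = a 0 * b 0 + a 1 * b 1 := by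
  simp [PiLp.inner_apply, Fin.sum_univ_two, RCLike.inner_apply, mul_comm]

lemma jrot0 (a : E2) : Jrot a 0 = -(a 1) := rfl
lemma jrot1 (a : E2) : Jrot a 1 = a 0 := rfl

lemma ext2 {a b : E2} (h0 : a 0 = b 0) (h1 : a 1 = b 1) : a = b := by
  ext i; fin_cases i <;> assumption

lemma norm2 (x : E2) : ‖x‖^2 = x 0^2 + x 1^2 := by
  rw [EuclideanSpace.norm_eq, Real.sq_sqrt (by positivity)]
  simp [Fin.sum_univ_two, sq_abs]

lemma inner_jrot (y u : E2) : ⟪y, Jrot u⟫ = cross2 u y := by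
  rw [inner2, jrot0, jrot1, cross2]; ring

lemma ne_zero2 {u : E2} (hu : u ≠ 0) : 0 < u 0 ^2 + u 1 ^2 := by
  by_contra h; push_neg at h
  refine hu (ext2 ?_ ?_) <;> · show _ = (0:ℝ)
                               nlinarith [sq_nonneg (u 0), sq_nonneg (u 1)]

lemma decomp (y u : E2) (hu : u ≠ 0) (h : ⟪y, u⟫ = 0) :
    y = (⟪y, Jrot u⟫ / ‖u‖^2) • Jrot u := by
  have hp := ne_zero2 hu
  have hco : y 0 * u 0 + y 1 * u 1 = 0 := by rw [← inner2]; exact h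
  have hn : ‖u‖^2 = u 0^2 + u 1^2 := norm2 u
  apply ext2
  · show y 0 = (⟪y, Jrot u⟫ / ‖u‖^2) * Jrot u 0
    rw [inner_jrot, jrot0, cross2, hn]
    field_simp
    linear_combination u 0 * hco
  · show y 1 = (⟪y, Jrot u⟫ / ‖u‖^2) * Jrot u 1
    rw [inner_jrot, jrot1, cross2, hn]
    field_simp
    linear_combination u 1 * hco

lemma distlem (S : Set E2) (ξ m vi dir : E2) (hdir : dir ≠ 0)
    (horth : ⟪m - ξ, dir⟫ = 0)
    (hpos : 0 < ⟪m - ξ, Jrot dir⟫)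
    (hmv : ⟪m - vi, Jrot dir⟫ = 0)
    (hmS : m ∈ S)
    (hside : ∀ z ∈ S, 0 ≤ ⟪z - vi, Jrot dir⟫) :
    ‖m - ξ‖ = Metric.infDist ξ S := by
  set τ := Jrot dir with hτ
  have hτn : ‖τ‖^2 = ‖dir‖^2 := by rw [norm2, norm2, hτ, jrot0, jrot1]; ring
  have hdir2 : 0 < ‖dir‖^2 := by rw [norm2]; exact ne_zero2 hdir
  have hτpos : 0 < ‖τ‖ := by
    have h := hτn ▸ hdir2
    nlinarith [norm_nonneg τ]
  have hdec : m - ξ = (⟪m - ξ, τ⟫ / ‖dir‖^2) • τ := decomp _ _ hdir horth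
  have ht : 0 < ⟪m - ξ, τ⟫ / ‖dir‖^2 := div_pos hpos hdir2
  have hkey : ⟪m - ξ, τ⟫ = ‖m - ξ‖ * ‖τ‖ := by
    nth_rewrite 1 [hdec]
    nth_rewrite 2 [hdec]
    rw [real_inner_smul_left, norm_smul, real_inner_self_eq_norm_mul_norm]
    rw [Real.norm_eq_abs, abs_of_pos ht]
    ring
  apply le_antisymm
  · rw [Metric.infDist_eq_iInf]
    haveI : Nonempty S := ⟨⟨m, hmS⟩⟩
    apply le_ciInf
    rintro ⟨z, hz⟩
    have hsplit : ⟪m - ξ, τ⟫ = ⟪m - vi, τ⟫ + (- ⟪z - vi, τ⟫) + ⟪z - ξ, τ⟫ := by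
      rw [← inner_neg_left, ← inner_add_left, ← inner_add_left]
      congr 1
      module
    have hcs : ⟪z - ξ, τ⟫ ≤ ‖z - ξ‖ * ‖τ‖ := real_inner_le_norm _ _
    have h1 : ‖m - ξ‖ * ‖τ‖ ≤ ‖z - ξ‖ * ‖τ‖ := by
      rw [← hkey]
      have := hside z hz
      linarith [hsplit, hmv]
    have h2 : ‖m - ξ‖ ≤ ‖z - ξ‖ := le_of_mul_le_mul_right h1 hτpos
    calc ‖m - ξ‖ ≤ ‖z - ξ‖ := h2
    _ = dist ξ z := by rw [dist_eq_norm, norm_sub_rev]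
  · calc Metric.infDist ξ S ≤ dist ξ m := Metric.infDist_le_dist_of_mem hmS
    _ = ‖m - ξ‖ := by rw [dist_eq_norm, norm_sub_rev]

lemma key (p q s c B G : ℝ) (hc : 0 < c) (hp : 0 < p) (hq : 0 < q)
    (hlag : p*q = s*s + c*c)
    (e0 : (c/2 - B)*p = G*s) (e2 : (c/2 - G)*q = B*s) :
    ¬(G<0 ∧ B<0) ∧ ¬(G<0 ∧ c-B-G<0) ∧ ¬(B<0 ∧ c-B-G<0) := by
  have hprod : ((c/2 - B)*p) * ((c/2 - G)*q) = (G*s)*(B*s) := by rw [e0, e2]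
  have heq : s*s*(c*c/4 - B*c/2 - G*c/2) + (c/2-B)*(c/2-G)*(c*c) = 0 := by
    linear_combination hprod - (c/2-B)*(c/2-G)*hlag
  refine ⟨fun ⟨h1,h2⟩ => ?_, fun ⟨h1,h2⟩ => ?_, fun ⟨h1,h2⟩ => ?_⟩
  · have h4 : 0 ≤ s*s*(c*c/4 - B*c/2 - G*c/2) :=
      mul_nonneg (mul_self_nonneg s) (by nlinarith)
    have h5 : 0 < (c/2-B)*(c/2-G)*(c*c) :=
      mul_pos (mul_pos (by linarith) (by linarith)) (mul_pos hc hc)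
    linarith
  · have hM : s*s*(c*c/4 - B*c/2 - G*c/2) ≤ 0 :=
      mul_nonpos_of_nonneg_of_nonpos (mul_self_nonneg s) (by nlinarith)
    have hP : (c/2-B)*(c/2-G)*(c*c) < 0 :=
      mul_neg_of_neg_of_pos
        (mul_neg_of_neg_of_pos (by linarith) (by linarith)) (mul_pos hc hc)
    linarith
  · have hM : s*s*(c*c/4 - B*c/2 - G*c/2) ≤ 0 :=
      mul_nonpos_of_nonneg_of_nonpos (mul_self_nonneg s) (by nlinarith)
    have hP : (c/2-B)*(c/2-G)*(c*c) < 0 :=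
      mul_neg_of_neg_of_pos (mul_neg_of_pos_of_neg (by linarith) (by linarith)) (mul_pos hc hc)
    linarith

lemma hull_side {s : Set E2} {τ z : E2} {a : ℝ}
    (hz : z ∈ convexHull ℝ s) (hs : ∀ y ∈ s, a ≤ ⟪y, τ⟫) : a ≤ ⟪z, τ⟫ :=
  convexHull_min hs (convex_halfSpace_ge
    ⟨fun x y => inner_add_left x y τ, fun c x => real_inner_smul_left x τ c⟩ a) hz

lemma side_all (v : Fin 3 → E2) (i j k : Fin 3) (hperm : ∀ l, l = i ∨ l = j ∨ l = k)
    (hcross : 0 < ⟪v k - v i, Jrot (v j - v i)⟫)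
    (horthij : ⟪v j - v i, Jrot (v j - v i)⟫ = 0) :
    ∀ z ∈ convexHull ℝ (Set.range v), 0 ≤ ⟪z - v i, Jrot (v j - v i)⟫ := by
  intro z hz
  rw [inner_sub_left]
  have h : ⟪v i, Jrot (v j - v i)⟫ ≤ ⟪z, Jrot (v j - v i)⟫ := by
    refine hull_side hz ?_
    rintro y ⟨l, rfl⟩
    rcases hperm l with rfl|rfl|rfl
    · exact le_rfl
    · rw [inner_sub_left] at horthij; linarith
    · rw [inner_sub_left] at hcross; linarith
  linarith

set_option maxHeartbeats 2000000 in
theorem stmt19 (v : Fin 3 → EuclideanSpace ℝ (Fin 2))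
    (ξ : EuclideanSpace ℝ (Fin 2))
    (hdist : Function.Injective v)
    (hnc : cross2 (v 1 - v 0) (v 2 - v 0) ≠ 0)
    (hccw : 0 < cross2 (v 1 - v 0) (v 2 - v 1))
    (hcirc : ∀ i j : Fin 3, ‖v i - ξ‖ = ‖v j - ξ‖) :
    (ξ ∈ convexHull ℝ (Set.range v) →
      ∀ i : Fin 3,
        ⟪(2 : ℝ)⁻¹ • (v i + v (i + 1)) - ξ, Jrot (v (i + 1) - v i)⟫ ≤ 0) ∧
    (ξ ∉ convexHull ℝ (Set.range v) →
      ∃ i : Fin 3,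
        (0 < ⟪(2 : ℝ)⁻¹ • (v i + v (i + 1)) - ξ, Jrot (v (i + 1) - v i)⟫ ∧
          ‖(2 : ℝ)⁻¹ • (v i + v (i + 1)) - ξ‖ =
            Metric.infDist ξ (convexHull ℝ (Set.range v))) ∧
        ∀ j : Fin 3,
          0 < ⟪(2 : ℝ)⁻¹ • (v j + v (j + 1)) - ξ, Jrot (v (j + 1) - v j)⟫ →
            j = i) := by
  have sub_app : ∀ (a b : E2) (i : Fin 2), (a - b) i = a i - b i := fun _ _ _ => rfl
  have add_app : ∀ (a b : E2) (i : Fin 2), (a + b) i = a i + b i := fun _ _ _ => rfl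
  have smul_app : ∀ (r : ℝ) (a : E2) (i : Fin 2), (r • a) i = r * a i := fun _ _ _ => rfl
  -- coordinate form of the circumradius condition
  have hcc : 0 < (v 1 0 - v 0 0)*(v 2 1 - v 0 1) - (v 1 1 - v 0 1)*(v 2 0 - v 0 0) := by
    have h := hccw
    simp only [cross2, sub_app] at h
    nlinarith [h]
  -- midpoint orthogonality
  have hmid : ∀ i : Fin 3, ⟪(2:ℝ)⁻¹ • (v i + v (i+1)) - ξ, v (i+1) - v i⟫ = 0 := by
    intro i
    have h := hcirc (i+1) i
    have h2 : ⟪v (i+1) - ξ, v (i+1) - ξ⟫ = ⟪v i - ξ, v i - ξ⟫ := by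
      rw [real_inner_self_eq_norm_mul_norm, real_inner_self_eq_norm_mul_norm, h]
    have hv : (2:ℝ)⁻¹ • (v i + v (i+1)) - ξ = (2:ℝ)⁻¹ • ((v i - ξ) + (v (i+1) - ξ)) := by
      module
    have hd : v (i+1) - v i = (v (i+1) - ξ) - (v i - ξ) := by module
    rw [hv, hd, real_inner_smul_left, inner_sub_right, inner_add_left, inner_add_left]
    rw [real_inner_comm (v i - ξ) (v (i+1) - ξ)]
    linarith
  have hm0 := hmid 0
  have hm2 := hmid 2
  simp only [show ((0:Fin 3)+1) = 1 from rfl, show ((2:Fin 3)+1) = 0 from rfl] at hm0 hm2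
  rw [inner2] at hm0 hm2
  simp only [sub_app, add_app, smul_app] at hm0 hm2
  -- algebraic data
  have hP : (0:ℝ) < (v 1 0 - v 0 0)^2 + (v 1 1 - v 0 1)^2 := by
    have h := ne_zero2 (sub_ne_zero.mpr (hdist.ne (by decide : (1:Fin 3) ≠ 0)))
    simpa [sub_app] using h
  have hQ : (0:ℝ) < (v 2 0 - v 0 0)^2 + (v 2 1 - v 0 1)^2 := by
    have h := ne_zero2 (sub_ne_zero.mpr (hdist.ne (by decide : (2:Fin 3) ≠ 0)))
    simpa [sub_app] using h
  have hlag : ((v 1 0 - v 0 0)^2 + (v 1 1 - v 0 1)^2) * ((v 2 0 - v 0 0)^2 + (v 2 1 - v 0 1)^2)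
      = ((v 1 0 - v 0 0)*(v 2 0 - v 0 0) + (v 1 1 - v 0 1)*(v 2 1 - v 0 1)) *
        ((v 1 0 - v 0 0)*(v 2 0 - v 0 0) + (v 1 1 - v 0 1)*(v 2 1 - v 0 1)) +
        ((v 1 0 - v 0 0)*(v 2 1 - v 0 1) - (v 1 1 - v 0 1)*(v 2 0 - v 0 0)) *
        ((v 1 0 - v 0 0)*(v 2 1 - v 0 1) - (v 1 1 - v 0 1)*(v 2 0 - v 0 0)) := by ring
  have e0 : (((v 1 0 - v 0 0)*(v 2 1 - v 0 1) - (v 1 1 - v 0 1)*(v 2 0 - v 0 0))/2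
        - ((ξ 0 - v 0 0)*(v 2 1 - v 0 1) - (ξ 1 - v 0 1)*(v 2 0 - v 0 0))) *
        ((v 1 0 - v 0 0)^2 + (v 1 1 - v 0 1)^2)
      = ((v 1 0 - v 0 0)*(ξ 1 - v 0 1) - (v 1 1 - v 0 1)*(ξ 0 - v 0 0)) *
        ((v 1 0 - v 0 0)*(v 2 0 - v 0 0) + (v 1 1 - v 0 1)*(v 2 1 - v 0 1)) := by
    linear_combination ((v 1 0 - v 0 0)*(v 2 1 - v 0 1) - (v 1 1 - v 0 1)*(v 2 0 - v 0 0)) * hm0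
  have e2 : (((v 1 0 - v 0 0)*(v 2 1 - v 0 1) - (v 1 1 - v 0 1)*(v 2 0 - v 0 0))/2
        - ((v 1 0 - v 0 0)*(ξ 1 - v 0 1) - (v 1 1 - v 0 1)*(ξ 0 - v 0 0))) *
        ((v 2 0 - v 0 0)^2 + (v 2 1 - v 0 1)^2)
      = ((ξ 0 - v 0 0)*(v 2 1 - v 0 1) - (ξ 1 - v 0 1)*(v 2 0 - v 0 0)) *
        ((v 1 0 - v 0 0)*(v 2 0 - v 0 0) + (v 1 1 - v 0 1)*(v 2 1 - v 0 1)) := by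
    linear_combination (-((v 1 0 - v 0 0)*(v 2 1 - v 0 1) - (v 1 1 - v 0 1)*(v 2 0 - v 0 0))) * hm2
  obtain ⟨k1, k2, k3⟩ := key _ _ _ _ _ _ hcc hP hQ hlag e0 e2
  -- sign identities
  have hsign0 : ⟪(2:ℝ)⁻¹ • (v 0 + v 1) - ξ, Jrot (v 1 - v 0)⟫ = -((v 1 0 - v 0 0)*(ξ 1 - v 0 1) - (v 1 1 - v 0 1)*(ξ 0 - v 0 0)) := by
    rw [inner2]; simp only [sub_app, add_app, smul_app, jrot0, jrot1]; ring
  have hsign1 : ⟪(2:ℝ)⁻¹ • (v 1 + v 2) - ξ, Jrot (v 2 - v 1)⟫ = -(((v 1 0 - v 0 0)*(v 2 1 - v 0 1) - (v 1 1 - v 0 1)*(v 2 0 - v 0 0)) - ((ξ 0 - v 0 0)*(v 2 1 - v 0 1) - (ξ 1 - v 0 1)*(v 2 0 - v 0 0)) - ((v 1 0 - v 0 0)*(ξ 1 - v 0 1) - (v 1 1 - v 0 1)*(ξ 0 - v 0 0))) := by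
    rw [inner2]; simp only [sub_app, add_app, smul_app, jrot0, jrot1]; ring
  have hsign2 : ⟪(2:ℝ)⁻¹ • (v 2 + v 0) - ξ, Jrot (v 0 - v 2)⟫ = -((ξ 0 - v 0 0)*(v 2 1 - v 0 1) - (ξ 1 - v 0 1)*(v 2 0 - v 0 0)) := by
    rw [inner2]; simp only [sub_app, add_app, smul_app, jrot0, jrot1]; ring
  -- half-plane facts
  have hsd0 := side_all v 0 1 2 (by decide) (by rw [inner2]; simp only [sub_app, add_app, smul_app, jrot0, jrot1]; nlinarith [hcc]) (by rw [inner2]; simp only [sub_app, add_app, smul_app, jrot0, jrot1]; ring)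
  have hsd1 := side_all v 1 2 0 (by decide) (by rw [inner2]; simp only [sub_app, add_app, smul_app, jrot0, jrot1]; nlinarith [hcc]) (by rw [inner2]; simp only [sub_app, add_app, smul_app, jrot0, jrot1]; ring)
  have hsd2 := side_all v 2 0 1 (by decide) (by rw [inner2]; simp only [sub_app, add_app, smul_app, jrot0, jrot1]; nlinarith [hcc]) (by rw [inner2]; simp only [sub_app, add_app, smul_app, jrot0, jrot1]; ring)
  have hin0 : ⟪ξ - v 0, Jrot (v 1 - v 0)⟫ = ((v 1 0 - v 0 0)*(ξ 1 - v 0 1) - (v 1 1 - v 0 1)*(ξ 0 - v 0 0)) := by rw [inner2]; simp only [sub_app, add_app, smul_app, jrot0, jrot1]; ring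
  have hin1 : ⟪ξ - v 1, Jrot (v 2 - v 1)⟫ = ((v 1 0 - v 0 0)*(v 2 1 - v 0 1) - (v 1 1 - v 0 1)*(v 2 0 - v 0 0)) - ((ξ 0 - v 0 0)*(v 2 1 - v 0 1) - (ξ 1 - v 0 1)*(v 2 0 - v 0 0)) - ((v 1 0 - v 0 0)*(ξ 1 - v 0 1) - (v 1 1 - v 0 1)*(ξ 0 - v 0 0)) := by rw [inner2]; simp only [sub_app, add_app, smul_app, jrot0, jrot1]; ring
  have hin2 : ⟪ξ - v 2, Jrot (v 0 - v 2)⟫ = ((ξ 0 - v 0 0)*(v 2 1 - v 0 1) - (ξ 1 - v 0 1)*(v 2 0 - v 0 0)) := by rw [inner2]; simp only [sub_app, add_app, smul_app, jrot0, jrot1]; ring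
  -- midpoints belong to the hull
  have hmidmem : ∀ i j : Fin 3, (2:ℝ)⁻¹ • (v i + v j) ∈ convexHull ℝ (Set.range v) := by
    intro i j
    have h := (convex_convexHull ℝ (Set.range v)) (subset_convexHull ℝ _ ⟨i, rfl⟩)
      (subset_convexHull ℝ _ ⟨j, rfl⟩) (by norm_num : (0:ℝ) ≤ 2⁻¹)
      (by norm_num : (0:ℝ) ≤ 2⁻¹) (by norm_num)
    rw [smul_add]
    exact h
  -- membership from nonnegative barycentric coordinates
  have hmem : 0 ≤ ((v 1 0 - v 0 0)*(ξ 1 - v 0 1) - (v 1 1 - v 0 1)*(ξ 0 - v 0 0)) → 0 ≤ ((ξ 0 - v 0 0)*(v 2 1 - v 0 1) - (ξ 1 - v 0 1)*(v 2 0 - v 0 0)) → 0 ≤ ((v 1 0 - v 0 0)*(v 2 1 - v 0 1) - (v 1 1 - v 0 1)*(v 2 0 - v 0 0)) - ((ξ 0 - v 0 0)*(v 2 1 - v 0 1) - (ξ 1 - v 0 1)*(v 2 0 - v 0 0)) - ((v 1 0 - v 0 0)*(ξ 1 - v 0 1) - (v 1 1 - v 0 1)*(ξ 0 - v 0 0))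 →
      ξ ∈ convexHull ℝ (Set.range v) := by
    intro hg hb ha
    have h := Finset.centerMass_mem_convexHull (Finset.univ : Finset (Fin 3))
      (w := ![(((v 1 0 - v 0 0)*(v 2 1 - v 0 1) - (v 1 1 - v 0 1)*(v 2 0 - v 0 0)) - ((ξ 0 - v 0 0)*(v 2 1 - v 0 1) - (ξ 1 - v 0 1)*(v 2 0 - v 0 0)) - ((v 1 0 - v 0 0)*(ξ 1 - v 0 1) - (v 1 1 - v 0 1)*(ξ 0 - v 0 0)))/((v 1 0 - v 0 0)*(v 2 1 - v 0 1) - (v 1 1 - v 0 1)*(v 2 0 - v 0 0)), ((ξ 0 - v 0 0)*(v 2 1 - v 0 1) - (ξ 1 - v 0 1)*(v 2 0 - v 0 0))/((v 1 0 - v 0 0)*(v 2 1 - v 0 1) - (v 1 1 - v 0 1)*(v 2 0 - v 0 0)), ((v 1 0 - v 0 0)*(ξ 1 - v 0 1) - (v 1 1 - v 0 1)*(ξ 0 - v 0 0))/((v 1 0 - v 0 0)*(v 2 1 - v 0 1) - (v 1 1 - v 0 1)*(v 2 0 - v 0 0))]) (z := v) (s := Set.range v)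
      ?_ ?_ ?_
    · have hξeq : (Finset.univ : Finset (Fin 3)).centerMass
          ![(((v 1 0 - v 0 0)*(v 2 1 - v 0 1) - (v 1 1 - v 0 1)*(v 2 0 - v 0 0)) - ((ξ 0 - v 0 0)*(v 2 1 - v 0 1) - (ξ 1 - v 0 1)*(v 2 0 - v 0 0)) - ((v 1 0 - v 0 0)*(ξ 1 - v 0 1) - (v 1 1 - v 0 1)*(ξ 0 - v 0 0)))/((v 1 0 - v 0 0)*(v 2 1 - v 0 1) - (v 1 1 - v 0 1)*(v 2 0 - v 0 0)), ((ξ 0 - v 0 0)*(v 2 1 - v 0 1) - (ξ 1 - v 0 1)*(v 2 0 - v 0 0))/((v 1 0 - v 0 0)*(v 2 1 - v 0 1) - (v 1 1 - v 0 1)*(v 2 0 - v 0 0)), ((v 1 0 - v 0 0)*(ξ 1 - v 0 1) - (v 1 1 - v 0 1)*(ξ 0 - v 0 0))/((v 1 0 - v 0 0)*(v 2 1 - v 0 1) - (v 1 1 - v 0 1)*(v 2 0 - v 0 0))] v = ξ := by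
        rw [Finset.centerMass]
        have hsum' : ∑ i : Fin 3, (![(((v 1 0 - v 0 0)*(v 2 1 - v 0 1) - (v 1 1 - v 0 1)*(v 2 0 - v 0 0)) - ((ξ 0 - v 0 0)*(v 2 1 - v 0 1) - (ξ 1 - v 0 1)*(v 2 0 - v 0 0)) - ((v 1 0 - v 0 0)*(ξ 1 - v 0 1) - (v 1 1 - v 0 1)*(ξ 0 - v 0 0)))/((v 1 0 - v 0 0)*(v 2 1 - v 0 1) - (v 1 1 - v 0 1)*(v 2 0 - v 0 0)), ((ξ 0 - v 0 0)*(v 2 1 - v 0 1) - (ξ 1 - v 0 1)*(v 2 0 - v 0 0))/((v 1 0 - v 0 0)*(v 2 1 - v 0 1) - (v 1 1 - v 0 1)*(v 2 0 - v 0 0)), ((v 1 0 - v 0 0)*(ξ 1 - v 0 1) - (v 1 1 - v 0 1)*(ξ 0 - v 0 0))/((v 1 0 - v 0 0)*(v 2 1 - v 0 1) - (v 1 1 - v 0 1)*(v 2 0 - v 0 0))]) i = 1 := by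
          simp [Fin.sum_univ_three]
          field_simp
          ring
        rw [hsum', inv_one, one_smul, Fin.sum_univ_three]
        apply ext2 <;>
        · simp only [add_app, smul_app, Matrix.cons_val_zero, Matrix.cons_val_one,
            Matrix.head_cons, Matrix.cons_val_two, Matrix.tail_cons]
          field_simp
          ring
      rwa [hξeq] at h
    · intro i _
      fin_cases i <;>
        simp only [Matrix.cons_val_zero, Matrix.cons_val_one, Matrix.head_cons,
          Matrix.cons_val_two, Matrix.tail_cons] <;>
        exact div_nonneg (by assumption) hcc.le
    · have hsum : ∑ i : Fin 3, (![(((v 1 0 - v 0 0)*(v 2 1 - v 0 1) - (v 1 1 - v 0 1)*(v 2 0 - v 0 0)) - ((ξ 0 - v 0 0)*(v 2 1 - v 0 1) - (ξ 1 - v 0 1)*(v 2 0 - v 0 0)) - ((v 1 0 - v 0 0)*(ξ 1 - v 0 1) - (v 1 1 - v 0 1)*(ξ 0 - v 0 0)))/((v 1 0 - v 0 0)*(v 2 1 - v 0 1) - (v 1 1 - v 0 1)*(v 2 0 - v 0 0)), ((ξ 0 - v 0 0)*(v 2 1 - v 0 1) - (ξ 1 - v 0 1)*(v 2 0 - v 0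 0))/((v 1 0 - v 0 0)*(v 2 1 - v 0 1) - (v 1 1 - v 0 1)*(v 2 0 - v 0 0)), ((v 1 0 - v 0 0)*(ξ 1 - v 0 1) - (v 1 1 - v 0 1)*(ξ 0 - v 0 0))/((v 1 0 - v 0 0)*(v 2 1 - v 0 1) - (v 1 1 - v 0 1)*(v 2 0 - v 0 0))]) i = 1 := by
        simp [Fin.sum_univ_three]
        field_simp
        ring
      rw [hsum]
      norm_num
    · exact fun i _ => ⟨i, rfl⟩
  have fin3 : ∀ j : Fin 3, j = 0 ∨ j = 1 ∨ j = 2 := by decide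
  constructor
  · -- Part A
    intro hξ i
    rcases fin3 i with rfl|rfl|rfl
    · simp only [show ((0:Fin 3)+1) = 1 from rfl]
      rw [hsign0]
      have := hsd0 ξ hξ
      rw [hin0] at this
      linarith
    · simp only [show ((1:Fin 3)+1) = 2 from rfl]
      rw [hsign1]
      have := hsd1 ξ hξ
      rw [hin1] at this
      linarith
    · simp only [show ((2:Fin 3)+1) = 0 from rfl]
      rw [hsign2]
      have := hsd2 ξ hξ
      rw [hin2] at this
      linarith
  · -- Part B
    intro hξ
    have hm1 := hmid 1
    simp only [show ((1:Fin 3)+1) = 2 from rfl] at hm1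
    have hmm0 := hmid 0
    simp only [show ((0:Fin 3)+1) = 1 from rfl] at hmm0
    have hmm2 := hmid 2
    simp only [show ((2:Fin 3)+1) = 0 from rfl] at hmm2
    by_cases hG : ((v 1 0 - v 0 0)*(ξ 1 - v 0 1) - (v 1 1 - v 0 1)*(ξ 0 - v 0 0)) < 0
    · refine ⟨0, ⟨?_, ?_⟩, ?_⟩
      · simp only [show ((0:Fin 3)+1) = 1 from rfl]
        rw [hsign0]; linarith
      · simp only [show ((0:Fin 3)+1) = 1 from rfl]
        exact distlem _ ξ _ (v 0) (v 1 - v 0)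
          (sub_ne_zero.mpr (hdist.ne (by decide)))
          hmm0 (by rw [hsign0]; linarith)
          (by rw [inner2]; simp only [sub_app, add_app, smul_app, jrot0, jrot1]; ring) (hmidmem 0 1) hsd0
      · intro j hj
        rcases fin3 j with rfl|rfl|rfl
        · rfl
        · simp only [show ((1:Fin 3)+1) = 2 from rfl] at hj
          rw [hsign1] at hj
          exact absurd ⟨hG, by linarith⟩ k2
        · simp only [show ((2:Fin 3)+1) = 0 from rfl] at hj
          rw [hsign2] at hj
          exact absurd ⟨hG, by linarith⟩ k1
    · by_cases hA : ((v 1 0 - v 0 0)*(v 2 1 - v 0 1) - (v 1 1 - v 0 1)*(v 2 0 - v 0 0)) - ((ξ 0 - v 0 0)*(v 2 1 - v 0 1) - (ξ 1 - v 0 1)*(v 2 0 - v 0 0)) - ((v 1 0 - v 0 0)*(ξ 1 - v 0 1) - (v 1 1 - v 0 1)*(ξ 0 - v 0 0)) < 0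
      · refine ⟨1, ⟨?_, ?_⟩, ?_⟩
        · simp only [show ((1:Fin 3)+1) = 2 from rfl]
          rw [hsign1]; linarith
        · simp only [show ((1:Fin 3)+1) = 2 from rfl]
          exact distlem _ ξ _ (v 1) (v 2 - v 1)
            (sub_ne_zero.mpr (hdist.ne (by decide)))
            hm1 (by rw [hsign1]; linarith)
            (by rw [inner2]; simp only [sub_app, add_app, smul_app, jrot0, jrot1]; ring) (hmidmem 1 2) hsd1
        · intro j hj
          rcases fin3 j with rfl|rfl|rfl
          · simp only [show ((0:Fin 3)+1) = 1 from rfl] at hj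
            rw [hsign0] at hj
            exact absurd (show ((v 1 0 - v 0 0)*(ξ 1 - v 0 1) - (v 1 1 - v 0 1)*(ξ 0 - v 0 0)) < 0 by linarith) hG
          · rfl
          · simp only [show ((2:Fin 3)+1) = 0 from rfl] at hj
            rw [hsign2] at hj
            exact absurd ⟨by linarith, hA⟩ k3
      · by_cases hB : ((ξ 0 - v 0 0)*(v 2 1 - v 0 1) - (ξ 1 - v 0 1)*(v 2 0 - v 0 0)) < 0
        · refine ⟨2, ⟨?_, ?_⟩, ?_⟩
          · simp only [show ((2:Fin 3)+1) = 0 from rfl]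
            rw [hsign2]; linarith
          · simp only [show ((2:Fin 3)+1) = 0 from rfl]
            exact distlem _ ξ _ (v 2) (v 0 - v 2)
              (sub_ne_zero.mpr (fun h => hdist.ne (by decide : (0:Fin 3) ≠ 2) h))
              hmm2 (by rw [hsign2]; linarith)
              (by rw [inner2]; simp only [sub_app, add_app, smul_app, jrot0, jrot1]; ring) (hmidmem 2 0) hsd2
          · intro j hj
            rcases fin3 j with rfl|rfl|rfl
            · simp only [show ((0:Fin 3)+1) = 1 from rfl] at hj
              rw [hsign0] at hj
              exact absurd (show ((v 1 0 - v 0 0)*(ξ 1 - v 0 1) - (v 1 1 - v 0 1)*(ξ 0 - v 0 0)) < 0 by linarith) hG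
            · simp only [show ((1:Fin 3)+1) = 2 from rfl] at hj
              rw [hsign1] at hj
              exact absurd (show ((v 1 0 - v 0 0)*(v 2 1 - v 0 1) - (v 1 1 - v 0 1)*(v 2 0 - v 0 0)) - ((ξ 0 - v 0 0)*(v 2 1 - v 0 1) - (ξ 1 - v 0 1)*(v 2 0 - v 0 0)) - ((v 1 0 - v 0 0)*(ξ 1 - v 0 1) - (v 1 1 - v 0 1)*(ξ 0 - v 0 0)) < 0 by linarith) hA
            · rfl
        · exact absurd (hmem (not_lt.1 hG) (not_lt.1 hB) (not_lt.1 hA)) hξ
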